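/- Placing a single facility at the candidate location closest to the median of the reported positions is strategyproof: let ι be a nonempty finite set, C ⊆ ℝ a nonempty finite set, and define g(x) = t(med(x)) for x : ι → ℝ, where med(x) is the ⌈|ι|/2⌉-th smallest value among the x_i and t(p) is the smallest element of C minimizing |p − c| over c ∈ C. Then for every x : ι → ℝ, every i ∈ ι, and every x' ∈ ℝ, |x_i − g(x)| ≤ |x_i − g(x[i ↦ x'])|, where x[i ↦ x'] is x with the i-th coordinate replaced by x'. -/

import Mathlib

open Finset

/-- The smallest element of `C` minimizing the distance to `p`. -/
noncomputable def tloc (C : Finset ℝ) (p : ℝ) : ℝ :=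
  WithTop.untopD 0 ((C.filter fun c => ∀ c' ∈ C, |p - c| ≤ |p - c'|).min)

/-- The smallest element of `C \ {tloc C p}` minimizing the distance to `p`. -/
noncomputable def sloc (C : Finset ℝ) (p : ℝ) : ℝ :=
  tloc (C.erase (tloc C p)) p

/-- The `⌈n/2⌉`-th smallest element of a multiset of reals (0 if empty). -/
noncomputable def medOf (l : Multiset ℝ) : ℝ :=
  (l.sort (· ≤ ·)).getD ((Multiset.card l + 1) / 2 - 1) 0

/-- The median position of the agents in `S` with positions `x`. -/
noncomputable def medianPos (S : Finset ℕ) (x : ℕ → ℝ) : ℝ :=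
  medOf (S.val.map x)

/-- The Conditional-Median mechanism, assuming facility 1 is (weakly) more popular. -/
noncomputable def condMedian (x : ℕ → ℝ) (N1 N2 : Finset ℕ) (C : Finset ℝ) : ℝ × ℝ :=
  if (N1 ∩ N2).card ≤ (N1 \ N2).card then
    let m1 := medianPos (N1 \ N2) x
    let m2 := medianPos N2 x
    let w1 := tloc C m1
    (w1, if tloc C m2 ≠ w1 then tloc C m2 else sloc C m2)
  else
    let m12 := medianPos (N1 ∩ N2) x
    (tloc C m12, sloc C m12)

/-- The output of the Conditional-Median mechanism (roles swapped if `|N₂| > |N₁|`). -/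
noncomputable def mechOutput (x : ℕ → ℝ) (N1 N2 : Finset ℕ) (C : Finset ℝ) : ℝ × ℝ :=
  if N2.card ≤ N1.card then condMedian x N1 N2 C
  else (condMedian x N2 N1 C).swap

/-- The cost of agent `i` at solution `y`: the distance to the farthest approved facility. -/
noncomputable def cost (x : ℕ → ℝ) (N1 N2 : Finset ℕ) (i : ℕ) (y : ℝ × ℝ) : ℝ :=
  if i ∈ N1 then
    if i ∈ N2 then max |x i - y.1| |x i - y.2| else |x i - y.1|
  else |x i - y.2|

/-- The social cost. -/
noncomputable def SC (x : ℕ → ℝ) (N1 N2 N : Finset ℕ) (y : ℝ × ℝ) : ℝ :=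
  ∑ i ∈ N, cost x N1 N2 i y

/-- The max cost. -/
noncomputable def MC (x : ℕ → ℝ) (N1 N2 N : Finset ℕ) (hN : N.Nonempty) (y : ℝ × ℝ) : ℝ :=
  N.sup' hN fun i => cost x N1 N2 i y

private lemma tloc_spec (C : Finset ℝ) (hC : C.Nonempty) (p : ℝ) :
    tloc C p ∈ C ∧ (∀ c ∈ C, |p - tloc C p| ≤ |p - c|) ∧
      (∀ c ∈ C, |p - c| ≤ |p - tloc C p| → tloc C p ≤ c) := by
  classical
  obtain ⟨a, ha, hmin⟩ := C.exists_min_image (fun c => |p - c|) hC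
  have hFne : (C.filter fun c => ∀ c' ∈ C, |p - c| ≤ |p - c'|).Nonempty :=
    ⟨a, Finset.mem_filter.2 ⟨ha, hmin⟩⟩
  obtain ⟨b, hb⟩ := Finset.min_of_nonempty hFne
  have htl : tloc C p = b := by rw [tloc, hb]; rfl
  have hbF := Finset.mem_of_min hb
  have hbC : b ∈ C := (Finset.mem_filter.1 hbF).1
  have hbmin : ∀ c ∈ C, |p - b| ≤ |p - c| := (Finset.mem_filter.1 hbF).2
  rw [htl]
  refine ⟨hbC, hbmin, fun c hc hcb => ?_⟩
  have hcF : c ∈ C.filter fun c => ∀ c' ∈ C, |p - c| ≤ |p - c'| :=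
    Finset.mem_filter.2 ⟨hc, fun c' hc' => le_trans hcb (hbmin c' hc')⟩
  have := Finset.min_le hcF
  rw [hb] at this
  exact_mod_cast this

private lemma abs_key_left {a b p z : ℝ} (hab : a ≤ b) (hp : |p - a| ≤ |p - b|)
    (hz : z ≤ p) : |z - a| ≤ |z - b| := by
  rcases eq_or_lt_of_le hab with rfl | hab'
  · exact le_refl _
  · have h2p : 2 * p ≤ a + b := by
      by_contra h
      push_neg at h
      have h1 : |p - b| < p - a := abs_lt.2 ⟨by linarith, by linarith⟩
      have h2 := le_abs_self (p - a)
      linarith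
    refine le_trans (abs_le.2 ⟨by linarith, by linarith⟩ : |z - a| ≤ b - z) ?_
    rw [abs_sub_comm]; exact le_abs_self _

private lemma abs_key_right {a b q z : ℝ} (hab : a ≤ b) (hq : |q - b| ≤ |q - a|)
    (hz : q ≤ z) : |z - b| ≤ |z - a| := by
  rcases eq_or_lt_of_le hab with rfl | hab'
  · exact le_refl _
  · have h2q : a + b ≤ 2 * q := by
      by_contra h
      push_neg at h
      have h1 : |q - a| < b - q := abs_lt.2 ⟨by linarith, by linarith⟩
      have h2 : -(q - b) ≤ |q - b| := neg_le_abs _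
      linarith
    refine le_trans (abs_le.2 ⟨by linarith, by linarith⟩ : |z - b| ≤ z - a) (le_abs_self _)

private lemma tloc_mono (C : Finset ℝ) (hC : C.Nonempty) {p q : ℝ} (hpq : p ≤ q) :
    tloc C p ≤ tloc C q := by
  by_contra h
  push_neg at h
  obtain ⟨haC, hamin, hatie⟩ := tloc_spec C hC p
  obtain ⟨hbC, hbmin, _⟩ := tloc_spec C hC q
  have hstrict : |p - tloc C p| < |p - tloc C q| := by
    rcases lt_or_ge (|p - tloc C p|) (|p - tloc C q|) with h' | h'
    · exact h'
    · exact absurd (hatie _ hbC h') (not_le.2 h)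
  have hq' : |q - tloc C q| ≤ |q - tloc C p| := hbmin _ haC
  have h1 : tloc C p + tloc C q < 2 * p := by
    by_contra h2
    push_neg at h2
    have h3 : |p - tloc C q| ≤ tloc C p - p := abs_le.2 ⟨by linarith, by linarith⟩
    have h4 : tloc C p - p ≤ |p - tloc C p| := by
      rw [abs_sub_comm]; exact le_abs_self _
    linarith
  have h5 : 2 * q ≤ tloc C p + tloc C q := by
    by_contra h2
    push_neg at h2
    have h3 : |q - tloc C p| < q - tloc C q := abs_lt.2 ⟨by linarith, by linarith⟩
    have h4 := le_abs_self (q - tloc C q)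
    linarith
  linarith

private lemma getD_middle (tw dw : List ℝ) (y : ℝ) : ∀ (j : ℕ),
    (tw ++ y :: dw).getD j 0 =
      if j < tw.length then tw.getD j 0
      else if j = tw.length then y
      else dw.getD (j - tw.length - 1) 0 := by
  induction tw with
  | nil => intro j; cases j <;> simp
  | cons a tw ih =>
    intro j
    cases j with
    | zero => simp
    | succ j =>
      simp only [List.cons_append, List.getD_cons_succ, ih j, List.length_cons]
      by_cases h1 : j < tw.length
      · rw [if_pos h1, if_pos (show j + 1 < tw.length + 1 by omega)]
      · rw [if_neg h1, if_neg (show ¬ j + 1 < tw.length + 1 by omega)]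
        by_cases h2 : j = tw.length
        · rw [if_pos h2, if_pos (show j + 1 = tw.length + 1 by omega)]
        · rw [if_neg h2, if_neg (show ¬ j + 1 = tw.length + 1 by omega)]
          congr 1
          omega

private lemma sort_cons_eq (s : Multiset ℝ) (y : ℝ) :
    (y ::ₘ s).sort (· ≤ ·) = (s.sort (· ≤ ·)).orderedInsert (· ≤ ·) y := by
  refine List.Perm.eq_of_pairwise' (Multiset.pairwise_sort _ _)
    (List.Pairwise.orderedInsert y _ (Multiset.pairwise_sort s _)) ?_
  rw [← Multiset.coe_eq_coe, Multiset.coe_eq_coe.2 (List.perm_orderedInsert _ y _),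
    Multiset.sort_eq, ← Multiset.cons_coe, Multiset.sort_eq]

private lemma getD_orderedInsert (l : List ℝ) (y : ℝ) (j : ℕ) :
    (l.orderedInsert (· ≤ ·) y).getD j 0 =
      if j < (l.takeWhile fun b => decide ¬(y ≤ b)).length then l.getD j 0
      else if j = (l.takeWhile fun b => decide ¬(y ≤ b)).length then y
      else l.getD (j - 1) 0 := by
  rw [List.orderedInsert_eq_take_drop, getD_middle]
  have hsplit : (l.takeWhile fun b => decide ¬(y ≤ b)) ++
      (l.dropWhile fun b => decide ¬(y ≤ b)) = l := List.takeWhile_append_dropWhile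
  by_cases h1 : j < (l.takeWhile fun b => decide ¬(y ≤ b)).length
  · rw [if_pos h1, if_pos h1]
    conv_rhs => rw [← hsplit]
    rw [List.getD_append _ _ _ _ h1]
  · rw [if_neg h1, if_neg h1]
    by_cases h2 : j = (l.takeWhile fun b => decide ¬(y ≤ b)).length
    · rw [if_pos h2, if_pos h2]
    · rw [if_neg h2, if_neg h2]
      conv_rhs => rw [← hsplit]
      rw [List.getD_append_right _ _ _ _ (by omega)]
      congr 1
      omega

private lemma sorted_getD_mono {l : List ℝ} (h : l.Pairwise (· ≤ ·)) {i j : ℕ}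
    (hij : i ≤ j) (hj : j < l.length) : l.getD i 0 ≤ l.getD j 0 := by
  rw [List.getD_eq_getElem _ _ (lt_of_le_of_lt hij hj), List.getD_eq_getElem _ _ hj]
  have := h.rel_get_of_le (a := ⟨i, lt_of_le_of_lt hij hj⟩) (b := ⟨j, hj⟩) hij
  simpa using this

private lemma lt_of_lt_takeWhile {l : List ℝ} {y : ℝ} {j : ℕ}
    (hj : j < (l.takeWhile fun b => decide ¬(y ≤ b)).length) :
    l.getD j 0 < y := by
  have hsplit : (l.takeWhile fun b => decide ¬(y ≤ b)) ++
      (l.dropWhile fun b => decide ¬(y ≤ b)) = l := List.takeWhile_append_dropWhile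
  have hmem := List.get_mem (l.takeWhile fun b => decide ¬(y ≤ b)) ⟨j, hj⟩
  have hp := List.mem_takeWhile_imp hmem
  simp only [decide_eq_true_eq] at hp
  have heq : l.getD j 0 = (l.takeWhile fun b => decide ¬(y ≤ b)).get ⟨j, hj⟩ := by
    conv_lhs => rw [← hsplit]
    rw [List.getD_append _ _ _ _ hj, List.getD_eq_getElem _ _ hj]
    simp
  rw [heq]
  exact lt_of_not_ge hp

private lemma le_of_takeWhile_le {l : List ℝ} (hs : l.Pairwise (· ≤ ·)) {y : ℝ} {j : ℕ}
    (ht : (l.takeWhile fun b => decide ¬(y ≤ b)).length ≤ j) (hj : j < l.length) :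
    y ≤ l.getD j 0 := by
  have hsplit : (l.takeWhile fun b => decide ¬(y ≤ b)) ++
      (l.dropWhile fun b => decide ¬(y ≤ b)) = l := List.takeWhile_append_dropWhile
  have hlen := congrArg List.length hsplit
  rw [List.length_append] at hlen
  have hdj : j - (l.takeWhile fun b => decide ¬(y ≤ b)).length <
      (l.dropWhile fun b => decide ¬(y ≤ b)).length := by omega
  have hdw_ne : (l.dropWhile fun b => decide ¬(y ≤ b)) ≠ [] := by
    intro h
    rw [h] at hdj
    simp at hdj
  have hhead : y ≤ (l.dropWhile fun b => decide ¬(y ≤ b)).head hdw_ne := by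
    have := List.head_dropWhile_not (fun b => decide ¬(y ≤ b)) hdw_ne
    simpa using this
  have hdw_sorted : (l.dropWhile fun b => decide ¬(y ≤ b)).Pairwise (· ≤ ·) :=
    List.Pairwise.sublist (List.dropWhile_sublist _) hs
  have h0 : 0 < (l.dropWhile fun b => decide ¬(y ≤ b)).length := List.length_pos_iff.2 hdw_ne
  have hhg := List.get_mk_zero h0
  have hmono := hdw_sorted.rel_get_of_le (a := ⟨0, h0⟩) (b := ⟨_, hdj⟩)
    (by simp [Fin.le_def])
  have heq : l.getD j 0 = (l.dropWhile fun b => decide ¬(y ≤ b)).get ⟨_, hdj⟩ := by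
    conv_lhs => rw [← hsplit]
    rw [List.getD_append_right _ _ _ _ ht, List.getD_eq_getElem _ _ hdj]
    simp
  rw [heq]
  calc y ≤ _ := hhead
    _ = _ := hhg.symm
    _ ≤ _ := hmono

private lemma med_le (s : Multiset ℝ) {j : ℕ} (hj : j ≤ Multiset.card s) {u : ℝ} (y : ℝ)
    (hu : u < ((u ::ₘ s).sort (· ≤ ·)).getD j 0) :
    ((u ::ₘ s).sort (· ≤ ·)).getD j 0 ≤ ((y ::ₘ s).sort (· ≤ ·)).getD j 0 := by
  have hsorted : (s.sort (· ≤ ·)).Pairwise (· ≤ ·) := Multiset.pairwise_sort _ _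
  have hlen : (s.sort (· ≤ ·)).length = Multiset.card s := Multiset.length_sort _
  rw [sort_cons_eq, getD_orderedInsert] at hu ⊢
  rw [sort_cons_eq, getD_orderedInsert]
  have hty_le : ((s.sort (· ≤ ·)).takeWhile fun b => decide ¬(y ≤ b)).length ≤
      (s.sort (· ≤ ·)).length := (List.takeWhile_prefix _).length_le
  have h1 : ((s.sort (· ≤ ·)).takeWhile fun b => decide ¬(u ≤ b)).length < j := by
    rcases lt_trichotomy j ((s.sort (· ≤ ·)).takeWhile fun b => decide ¬(u ≤ b)).length
      with h | h | h
    · rw [if_pos h] at hu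
      exact absurd hu (not_lt.2 (le_of_lt (lt_of_lt_takeWhile h)))
    · rw [if_neg (by omega), if_pos h] at hu
      exact absurd hu (lt_irrefl u)
    · exact h
  rw [if_neg (by omega), if_neg (by omega)] at hu ⊢
  by_cases h2 : j < ((s.sort (· ≤ ·)).takeWhile fun b => decide ¬(y ≤ b)).length
  · rw [if_pos h2]
    exact sorted_getD_mono hsorted (Nat.sub_le j 1) (lt_of_lt_of_le h2 hty_le)
  · rw [if_neg h2]
    by_cases h3 : j = ((s.sort (· ≤ ·)).takeWhile fun b => decide ¬(y ≤ b)).length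
    · rw [if_pos h3]
      exact le_of_lt (lt_of_lt_takeWhile (show j - 1 < _ by omega))
    · rw [if_neg h3]

private lemma med_ge (s : Multiset ℝ) {j : ℕ} (hj : j ≤ Multiset.card s) {u : ℝ} (y : ℝ)
    (hu : ((u ::ₘ s).sort (· ≤ ·)).getD j 0 < u) :
    ((y ::ₘ s).sort (· ≤ ·)).getD j 0 ≤ ((u ::ₘ s).sort (· ≤ ·)).getD j 0 := by
  have hsorted : (s.sort (· ≤ ·)).Pairwise (· ≤ ·) := Multiset.pairwise_sort _ _
  have hlen : (s.sort (· ≤ ·)).length = Multiset.card s := Multiset.length_sort _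
  rw [sort_cons_eq, getD_orderedInsert] at hu ⊢
  rw [sort_cons_eq, getD_orderedInsert]
  have htu_le : ((s.sort (· ≤ ·)).takeWhile fun b => decide ¬(u ≤ b)).length ≤
      (s.sort (· ≤ ·)).length := (List.takeWhile_prefix _).length_le
  have h1 : j < ((s.sort (· ≤ ·)).takeWhile fun b => decide ¬(u ≤ b)).length := by
    rcases lt_trichotomy j ((s.sort (· ≤ ·)).takeWhile fun b => decide ¬(u ≤ b)).length
      with h | h | h
    · exact h
    · rw [if_neg (by omega), if_pos h] at hu
      exact absurd hu (lt_irrefl u)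
    · exfalso
      rw [if_neg (by omega), if_neg (by omega)] at hu
      have : u ≤ (s.sort (· ≤ ·)).getD (j - 1) 0 :=
        le_of_takeWhile_le hsorted (by omega) (by omega)
      linarith
  have hjlen : j < (s.sort (· ≤ ·)).length := lt_of_lt_of_le h1 htu_le
  rw [if_pos h1] at hu ⊢
  by_cases h2 : j < ((s.sort (· ≤ ·)).takeWhile fun b => decide ¬(y ≤ b)).length
  · rw [if_pos h2]
  · rw [if_neg h2]
    by_cases h3 : j = ((s.sort (· ≤ ·)).takeWhile fun b => decide ¬(y ≤ b)).length
    · rw [if_pos h3]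
      exact le_of_takeWhile_le hsorted (by omega) hjlen
    · rw [if_neg h3]
      exact sorted_getD_mono hsorted (Nat.sub_le j 1) hjlen

/-- Placing a single facility at the candidate location closest to the median of the
reported positions is strategyproof. -/
theorem median_closest_strategyproof
    {ι : Type*} [Fintype ι] [DecidableEq ι] [Nonempty ι]
    (C : Finset ℝ) (hC : C.Nonempty)
    (x : ι → ℝ) (i : ι) (x' : ℝ) :
    |x i - tloc C (medOf (Finset.univ.val.map x))| ≤
      |x i - tloc C (medOf (Finset.univ.val.map (Function.update x i x')))| := by
  classical
  have hiv : i ∈ (Finset.univ : Finset ι).val := by rw [Finset.mem_val]; exact Finset.mem_univ i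
  set s : Multiset ℝ := ((Finset.univ : Finset ι).val.erase i).map x with hs
  have h1 : (Finset.univ : Finset ι).val.map x = x i ::ₘ s := by
    rw [hs, ← Multiset.map_cons, Multiset.cons_erase hiv]
  have h2 : (Finset.univ : Finset ι).val.map (Function.update x i x') = x' ::ₘ s := by
    conv_lhs => rw [← Multiset.cons_erase hiv]
    rw [Multiset.map_cons, Function.update_self]
    congr 1
    rw [hs]
    apply Multiset.map_congr rfl
    intro j hj
    have hji : j ≠ i := ((Finset.univ : Finset ι).nodup.mem_erase_iff.1 hj).1
    exact Function.update_of_ne hji _ _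
  rw [h1, h2]
  set m : ℝ := medOf (x i ::ₘ s) with hmdef
  set m' : ℝ := medOf (x' ::ₘ s) with hm'def
  have hidx1 : (Multiset.card (x i ::ₘ s) + 1) / 2 - 1 = (Multiset.card s + 2) / 2 - 1 := by
    rw [Multiset.card_cons]
  have hidx2 : (Multiset.card (x' ::ₘ s) + 1) / 2 - 1 = (Multiset.card s + 2) / 2 - 1 := by
    rw [Multiset.card_cons]
  have hmu : m =
      ((x i ::ₘ s).sort (· ≤ ·)).getD ((Multiset.card s + 2) / 2 - 1) 0 := by
    rw [hmdef, medOf, hidx1]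
  have hmy : m' =
      ((x' ::ₘ s).sort (· ≤ ·)).getD ((Multiset.card s + 2) / 2 - 1) 0 := by
    rw [hm'def, medOf, hidx2]
  have hjle : (Multiset.card s + 2) / 2 - 1 ≤ Multiset.card s := by omega
  obtain ⟨htC, htmin, _⟩ := tloc_spec C hC (m)
  obtain ⟨htC', htmin', _⟩ := tloc_spec C hC (m')
  rcases lt_trichotomy (x i) (m) with hlt | heq | hgt
  · have hmm' : m ≤ m' := by
      rw [hmu, hmy]
      exact med_le s hjle x' (by rw [← hmu]; exact hlt)
    exact abs_key_left (tloc_mono C hC hmm') (htmin _ htC') (le_of_lt hlt)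
  · rw [heq]
    exact htmin _ htC'
  · have hm'm : m' ≤ m := by
      rw [hmu, hmy]
      exact med_ge s hjle x' (by rw [← hmu]; exact hgt)
    exact abs_key_right (tloc_mono C hC hm'm) (htmin _ htC') (le_of_lt hgt)
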